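/- Assume κ ≠ 1. For every choice of sign functions s_1,s_2,s_3 : {1,…,n} → {−1,+1} and permutations π_1,π_2,π_3 of {1,…,n}, and for all A, B ∈ ℝ^{mn×mn}, the randomized computation satisfies ‖f̂(A,B) − A·B‖ ≤ ‖A‖ · ‖B‖ · ‖(1−κ)^{-1} Y − X‖. -/
import Mathlib


open scoped BigOperators Matrix

/-- Frobenius norm of a real matrix. -/
noncomputable def frob {ι κ : Type*} [Fintype ι] [Fintype κ] (A : Matrix ι κ ℝ) : ℝ :=
  Real.sqrt (∑ i, ∑ j, (A i j) ^ 2)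

/-- Frobenius norm of a 6-mode tensor. -/
noncomputable def frob6 {n : ℕ} (T : Fin n → Fin n → Fin n → Fin n → Fin n → Fin n → ℝ) : ℝ :=
  Real.sqrt (∑ k, ∑ l, ∑ k', ∑ l', ∑ i, ∑ j, (T k l k' l' i j) ^ 2)

/-- The 6-mode tensor Y with entries y_{klk'l'ij} = Σ_r u_{klr} v_{k'l'r} w_{ijr}. -/
noncomputable def Ytens {n R : ℕ} (U V W : Fin n → Fin n → Fin R → ℝ) :
    Fin n → Fin n → Fin n → Fin n → Fin n → Fin n → ℝ :=
  fun k l k' l' i j => ∑ r, U k l r * V k' l' r * W i j r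

/-- The exact matrix-multiplication tensor X, x_{klk'l'ij} = δ_{ki} δ_{l'j} δ_{lk'}. -/
def Xtens (n : ℕ) : Fin n → Fin n → Fin n → Fin n → Fin n → Fin n → ℝ :=
  fun k l k' l' i j =>
    (if k = i then (1 : ℝ) else 0) * (if l' = j then (1 : ℝ) else 0) *
      (if l = k' then (1 : ℝ) else 0)

/-- The block bilinear computation f on (mn)×(mn) matrices indexed by Fin n × Fin m
(first index: block position, second index: position within the m×m block). -/
noncomputable def blinf {n R m : ℕ} (U V W : Fin n → Fin n → Fin R → ℝ)
    (A B : Matrix (Fin n × Fin m) (Fin n × Fin m) ℝ) :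
    Matrix (Fin n × Fin m) (Fin n × Fin m) ℝ :=
  fun p q => ∑ r, W p.1 q.1 r *
    ∑ z, (∑ k, ∑ l, U k l r * A (k, p.2) (l, z)) *
         (∑ k', ∑ l', V k' l' r * B (k', z) (l', q.2))

/-- κ = n⁻³ Σ_{i,j,l} (1 − Σ_r u_{ilr} v_{ljr} w_{ijr}). -/
noncomputable def kappa {n R : ℕ} (U V W : Fin n → Fin n → Fin R → ℝ) : ℝ :=
  ((n : ℝ) ^ 3)⁻¹ * ∑ i, ∑ j, ∑ l, (1 - ∑ r, U i l r * V l j r * W i j r)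

/-- M = P S : block matrix with m×m block s(j)·I_m at block position (π(j), j). -/
def Mmat {n : ℕ} (m : ℕ) (s : Fin n → ℝ) (π : Equiv.Perm (Fin n)) :
    Matrix (Fin n × Fin m) (Fin n × Fin m) ℝ :=
  fun p q => if p.1 = π q.1 ∧ p.2 = q.2 then s q.1 else 0

/-- The randomized bilinear computation f̂(A,B) = (1−κ)⁻¹ M₁ᵀ f(M₁AM₂ᵀ, M₂BM₃ᵀ) M₃. -/
noncomputable def fhat {n R : ℕ} (m : ℕ) (U V W : Fin n → Fin n → Fin R → ℝ)
    (s₁ s₂ s₃ : Fin n → ℝ) (π₁ π₂ π₃ : Equiv.Perm (Fin n))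
    (A B : Matrix (Fin n × Fin m) (Fin n × Fin m) ℝ) :
    Matrix (Fin n × Fin m) (Fin n × Fin m) ℝ :=
  (1 - kappa U V W)⁻¹ •
    ((Mmat m s₁ π₁)ᵀ *
      blinf U V W (Mmat m s₁ π₁ * A * (Mmat m s₂ π₂)ᵀ) (Mmat m s₂ π₂ * B * (Mmat m s₃ π₃)ᵀ) *
      Mmat m s₃ π₃)


/-! ### Auxiliary machinery for the proof -/

section Aux

open scoped BigOperators Matrix

/-- Generic bilinear contraction against a 6-mode tensor. -/
noncomputable def Gmap {n m : ℕ} (T : Fin n → Fin n → Fin n → Fin n → Fin n → Fin n → ℝ)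
    (A B : Matrix (Fin n × Fin m) (Fin n × Fin m) ℝ) :
    Matrix (Fin n × Fin m) (Fin n × Fin m) ℝ :=
  fun p q => ∑ k, ∑ l, ∑ k', ∑ l', T k l k' l' p.1 q.1 *
    ∑ z, A (k, p.2) (l, z) * B (k', z) (l', q.2)

lemma sum_reorder6 {α₁ α₂ α₃ α₄ α₅ α₆ : Type*} [Fintype α₁] [Fintype α₂] [Fintype α₃]
    [Fintype α₄] [Fintype α₅] [Fintype α₆]
    (f : α₁ → α₂ → α₃ → α₄ → α₅ → α₆ → ℝ) :
    ∑ r, ∑ z, ∑ k', ∑ l', ∑ k, ∑ l, f r z k' l' k l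
      = ∑ k, ∑ l, ∑ k', ∑ l', ∑ z, ∑ r, f r z k' l' k l := by
  have h1 : ∑ r, ∑ z, ∑ k', ∑ l', ∑ k, ∑ l, f r z k' l' k l
      = ∑ x : α₁ × α₂ × α₃ × α₄ × α₅ × α₆,
          f x.1 x.2.1 x.2.2.1 x.2.2.2.1 x.2.2.2.2.1 x.2.2.2.2.2 := by
    simp [Fintype.sum_prod_type]
  have h2 : ∑ k, ∑ l, ∑ k', ∑ l', ∑ z, ∑ r, f r z k' l' k l
      = ∑ x : α₅ × α₆ × α₃ × α₄ × α₂ × α₁,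
          f x.2.2.2.2.2 x.2.2.2.2.1 x.2.2.1 x.2.2.2.1 x.1 x.2.1 := by
    simp [Fintype.sum_prod_type]
  rw [h1, h2]
  exact Fintype.sum_equiv
    ⟨fun x => (x.2.2.2.2.1, x.2.2.2.2.2, x.2.2.1, x.2.2.2.1, x.2.1, x.1),
     fun y => (y.2.2.2.2.2, y.2.2.2.2.1, y.2.2.1, y.2.2.2.1, y.1, y.2.1),
     fun x => rfl, fun y => rfl⟩ _ _ (fun x => rfl)

lemma sum_reorder6b {α₁ α₂ α₃ α₄ α₅ α₆ : Type*} [Fintype α₁] [Fintype α₂] [Fintype α₃]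
    [Fintype α₄] [Fintype α₅] [Fintype α₆]
    (f : α₁ → α₂ → α₃ → α₄ → α₅ → α₆ → ℝ) :
    ∑ i, ∑ j, ∑ k, ∑ l, ∑ k', ∑ l', f i j k l k' l'
      = ∑ k, ∑ l, ∑ k', ∑ l', ∑ i, ∑ j, f i j k l k' l' := by
  have h1 : ∑ i, ∑ j, ∑ k, ∑ l, ∑ k', ∑ l', f i j k l k' l'
      = ∑ x : α₁ × α₂ × α₃ × α₄ × α₅ × α₆,
          f x.1 x.2.1 x.2.2.1 x.2.2.2.1 x.2.2.2.2.1 x.2.2.2.2.2 := by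
    simp [Fintype.sum_prod_type]
  have h2 : ∑ k, ∑ l, ∑ k', ∑ l', ∑ i, ∑ j, f i j k l k' l'
      = ∑ x : α₃ × α₄ × α₅ × α₆ × α₁ × α₂,
          f x.2.2.2.2.1 x.2.2.2.2.2 x.1 x.2.1 x.2.2.1 x.2.2.2.1 := by
    simp [Fintype.sum_prod_type]
  rw [h1, h2]
  exact Fintype.sum_equiv
    ⟨fun x => (x.2.2.1, x.2.2.2.1, x.2.2.2.2.1, x.2.2.2.2.2, x.1, x.2.1),
     fun y => (y.2.2.2.2.1, y.2.2.2.2.2, y.1, y.2.1, y.2.2.1, y.2.2.2.1),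
     fun x => rfl, fun y => rfl⟩ _ _ (fun x => rfl)

lemma sum_reorder4 {α₁ α₂ α₃ α₄ : Type*} [Fintype α₁] [Fintype α₂] [Fintype α₃] [Fintype α₄]
    (f : α₁ → α₂ → α₃ → α₄ → ℝ) :
    ∑ b, ∑ k, ∑ l, ∑ z, f b k l z = ∑ k, ∑ z, ∑ l, ∑ b, f b k l z := by
  have h1 : ∑ b, ∑ k, ∑ l, ∑ z, f b k l z
      = ∑ x : α₁ × α₂ × α₃ × α₄, f x.1 x.2.1 x.2.2.1 x.2.2.2 := by
    simp [Fintype.sum_prod_type]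
  have h2 : ∑ k, ∑ z, ∑ l, ∑ b, f b k l z
      = ∑ x : α₂ × α₄ × α₃ × α₁, f x.2.2.2 x.1 x.2.2.1 x.2.1 := by
    simp [Fintype.sum_prod_type]
  rw [h1, h2]
  exact Fintype.sum_equiv
    ⟨fun x => (x.2.1, x.2.2.2, x.2.2.1, x.1), fun y => (y.2.2.2, y.1, y.2.2.1, y.2.1),
     fun x => rfl, fun y => rfl⟩ _ _ (fun x => rfl)

lemma blinf_eq {n R m : ℕ} (U V W : Fin n → Fin n → Fin R → ℝ)
    (A B : Matrix (Fin n × Fin m) (Fin n × Fin m) ℝ) :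
    blinf U V W A B = Gmap (Ytens U V W) A B := by
  funext p q
  simp only [blinf, Gmap, Ytens, Finset.mul_sum, Finset.sum_mul]
  rw [sum_reorder6 (f := fun r z k' l' k l =>
    W p.1 q.1 r * (U k l r * A (k, p.2) (l, z) * (V k' l' r * B (k', z) (l', q.2))))]
  refine Finset.sum_congr rfl fun k _ => Finset.sum_congr rfl fun l _ =>
    Finset.sum_congr rfl fun k' _ => Finset.sum_congr rfl fun l' _ =>
    Finset.sum_congr rfl fun z _ => Finset.sum_congr rfl fun r _ => by ring

lemma Gmap_X {n m : ℕ} (A B : Matrix (Fin n × Fin m) (Fin n × Fin m) ℝ) :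
    Gmap (Xtens n) A B = A * B := by
  funext p q
  simp only [Gmap, Xtens, Matrix.mul_apply, ite_mul, one_mul, zero_mul,
    Finset.sum_ite_eq, Finset.mem_univ, if_true, Fintype.sum_prod_type]
  simp [Finset.sum_comm (f := fun l z => A (p.1, p.2) (l, z) * B (l, z) (q.1, q.2))]

lemma Gmap_sub_smul {n m : ℕ} (c : ℝ)
    (Y X' : Fin n → Fin n → Fin n → Fin n → Fin n → Fin n → ℝ)
    (A B : Matrix (Fin n × Fin m) (Fin n × Fin m) ℝ) :
    Gmap (c • Y - X') A B = c • Gmap Y A B - Gmap X' A B := by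
  funext p q
  simp only [Gmap, Pi.sub_apply, Pi.smul_apply, smul_eq_mul, Matrix.sub_apply,
    Matrix.smul_apply, sub_mul, Finset.sum_sub_distrib, Finset.mul_sum]
  ring_nf

section Mlemmas
variable {n m : ℕ} (s : Fin n → ℝ) (π : Equiv.Perm (Fin n))
  (C : Matrix (Fin n × Fin m) (Fin n × Fin m) ℝ)

lemma MT_mul : (Mmat m s π)ᵀ * C = fun p q => s p.1 * C (π p.1, p.2) q := by
  funext p q
  simp [Mmat, Matrix.mul_apply, Matrix.transpose_apply, Fintype.sum_prod_type, ite_and,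
    ite_mul, zero_mul, Finset.sum_ite_eq, Finset.sum_ite_eq']

lemma mul_M : C * Mmat m s π = fun p q => C p (π q.1, q.2) * s q.1 := by
  funext p q
  simp [Mmat, Matrix.mul_apply, Fintype.sum_prod_type, ite_and,
    mul_ite, mul_zero, Finset.sum_ite_eq, Finset.sum_ite_eq']

lemma M_mul : Mmat m s π * C = fun p q => s (π.symm p.1) * C (π.symm p.1, p.2) q := by
  funext p q
  have : ∀ r1 : Fin n, (p.1 = π r1) = (r1 = π.symm p.1) := by
    intro r1; simp [Equiv.eq_symm_apply, eq_comm]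
  simp [Mmat, Matrix.mul_apply, Fintype.sum_prod_type, ite_and, this,
    ite_mul, zero_mul, Finset.sum_ite_eq, Finset.sum_ite_eq']

lemma mul_MT : C * (Mmat m s π)ᵀ = fun p q => C p (π.symm q.1, q.2) * s (π.symm q.1) := by
  funext p q
  have : ∀ r1 : Fin n, (q.1 = π r1) = (r1 = π.symm q.1) := by
    intro r1; simp [Equiv.eq_symm_apply, eq_comm]
  simp [Mmat, Matrix.mul_apply, Matrix.transpose_apply, Fintype.sum_prod_type, ite_and, this,
    mul_ite, mul_zero, Finset.sum_ite_eq, Finset.sum_ite_eq']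

lemma MT_M (hs : ∀ j, s j = 1 ∨ s j = -1) : (Mmat m s π)ᵀ * Mmat m s π = 1 := by
  rw [MT_mul]
  funext p q
  have hsq : s p.1 * s p.1 = 1 := by rcases hs p.1 with h | h <;> rw [h] <;> norm_num
  by_cases hpq : p = q
  · subst hpq; simp [Mmat, Matrix.one_apply, hsq]
  · simp only [Mmat, Matrix.one_apply, if_neg hpq]
    by_cases h1 : p.1 = q.1
    · have h2 : p.2 ≠ q.2 := fun h2 => hpq (Prod.ext h1 h2)
      simp [h1, h2]
    · have : ¬(π p.1 = π q.1) := fun h => h1 (π.injective h)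
      simp [this]

lemma frob_left (t : Fin n × Fin m → ℝ) (ht : ∀ p, t p ^ 2 = 1)
    (σ : Equiv.Perm (Fin n × Fin m)) :
    frob (fun p q => t p * C (σ p) q) = frob C := by
  unfold frob
  congr 1
  rw [← Equiv.sum_comp σ (fun p => ∑ j, C p j ^ 2)]
  refine Finset.sum_congr rfl fun p _ => ?_
  refine Finset.sum_congr rfl fun q _ => ?_
  rw [mul_pow, ht p, one_mul]

lemma frob_right (t : Fin n × Fin m → ℝ) (ht : ∀ p, t p ^ 2 = 1)
    (σ : Equiv.Perm (Fin n × Fin m)) :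
    frob (fun p q => C p (σ q) * t q) = frob C := by
  unfold frob
  congr 1
  rw [Finset.sum_comm]
  conv_rhs => rw [Finset.sum_comm]
  rw [← Equiv.sum_comp σ (fun q => ∑ i, C i q ^ 2)]
  refine Finset.sum_congr rfl fun q _ => ?_
  refine Finset.sum_congr rfl fun p _ => ?_
  rw [mul_pow, ht q, mul_one]

lemma hts (hs : ∀ j, s j = 1 ∨ s j = -1) : ∀ p : Fin n × Fin m, (s p.1) ^ 2 = 1 := by
  intro p; rcases hs p.1 with h | h <;> rw [h] <;> norm_num

lemma hts' (hs : ∀ j, s j = 1 ∨ s j = -1) : ∀ p : Fin n × Fin m, (s (π.symm p.1)) ^ 2 = 1 := by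
  intro p; rcases hs (π.symm p.1) with h | h <;> rw [h] <;> norm_num

lemma frob_MT_mul (hs : ∀ j, s j = 1 ∨ s j = -1) : frob ((Mmat m s π)ᵀ * C) = frob C := by
  rw [MT_mul]
  exact frob_left C (fun p => s p.1) (hts s hs)
    ⟨fun p => (π p.1, p.2), fun p => (π.symm p.1, p.2),
     fun p => by simp, fun p => by simp⟩

lemma frob_mul_M (hs : ∀ j, s j = 1 ∨ s j = -1) : frob (C * Mmat m s π) = frob C := by
  rw [mul_M]
  exact frob_right C (fun q => s q.1) (hts s hs)
    ⟨fun p => (π p.1, p.2), fun p => (π.symm p.1, p.2),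
     fun p => by simp, fun p => by simp⟩

lemma frob_M_mul (hs : ∀ j, s j = 1 ∨ s j = -1) : frob (Mmat m s π * C) = frob C := by
  rw [M_mul]
  exact frob_left C (fun p => s (π.symm p.1)) (hts' s π hs)
    ⟨fun p => (π.symm p.1, p.2), fun p => (π p.1, p.2),
     fun p => by simp, fun p => by simp⟩

lemma frob_mul_MT (hs : ∀ j, s j = 1 ∨ s j = -1) : frob (C * (Mmat m s π)ᵀ) = frob C := by
  rw [mul_MT]
  exact frob_right C (fun q => s (π.symm q.1)) (hts' s π hs)
    ⟨fun p => (π.symm p.1, p.2), fun p => (π p.1, p.2),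
     fun p => by simp, fun p => by simp⟩

end Mlemmas

section CS
variable {n m : ℕ}

lemma Gmap_frob_le (E : Fin n → Fin n → Fin n → Fin n → Fin n → Fin n → ℝ)
    (A B : Matrix (Fin n × Fin m) (Fin n × Fin m) ℝ) :
    frob (Gmap E A B) ≤ frob6 E * frob A * frob B := by
  classical
  set e : Fin n → Fin n → ℝ := fun i j =>
    ∑ x : Fin n × Fin n × Fin n × Fin n, E x.1 x.2.1 x.2.2.1 x.2.2.2 i j ^ 2 with he
  set h : Fin m → Fin m → ℝ := fun a b =>
    ∑ x : Fin n × Fin n × Fin n × Fin n,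
      (∑ z, A (x.1, a) (x.2.1, z) * B (x.2.2.1, z) (x.2.2.2, b)) ^ 2 with hh
  have hGpt : ∀ p q : Fin n × Fin m, (Gmap E A B p q) ^ 2 ≤ e p.1 q.1 * h p.2 q.2 := by
    intro p q
    have hcollapse : Gmap E A B p q = ∑ x : Fin n × Fin n × Fin n × Fin n,
        E x.1 x.2.1 x.2.2.1 x.2.2.2 p.1 q.1 *
          ∑ z, A (x.1, p.2) (x.2.1, z) * B (x.2.2.1, z) (x.2.2.2, q.2) := by
      simp [Gmap, Fintype.sum_prod_type]
    rw [hcollapse]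
    exact Finset.sum_mul_sq_le_sq_mul_sq Finset.univ _ _
  have hsum : ∑ p : Fin n × Fin m, ∑ q : Fin n × Fin m, (Gmap E A B p q) ^ 2 ≤
      (∑ i, ∑ j, e i j) * (∑ a, ∑ b, h a b) := by
    calc ∑ p : Fin n × Fin m, ∑ q : Fin n × Fin m, (Gmap E A B p q) ^ 2
        ≤ ∑ p : Fin n × Fin m, ∑ q : Fin n × Fin m, e p.1 q.1 * h p.2 q.2 :=
          Finset.sum_le_sum fun p _ => Finset.sum_le_sum fun q _ => hGpt p q
      _ = (∑ i, ∑ j, e i j) * (∑ a, ∑ b, h a b) := by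
          simp only [Fintype.sum_prod_type, ← Finset.mul_sum, ← Finset.sum_mul]
  have hh_le : (∑ a, ∑ b, h a b) ≤ (∑ p, ∑ q, A p q ^ 2) * (∑ p, ∑ q, B p q ^ 2) := by
    calc (∑ a, ∑ b, h a b)
        ≤ ∑ a, ∑ b, ∑ x : Fin n × Fin n × Fin n × Fin n,
            (∑ z, A (x.1, a) (x.2.1, z) ^ 2) * (∑ z, B (x.2.2.1, z) (x.2.2.2, b) ^ 2) := by
          refine Finset.sum_le_sum fun a _ => Finset.sum_le_sum fun b _ =>
            Finset.sum_le_sum fun x _ => ?_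
          exact Finset.sum_mul_sq_le_sq_mul_sq Finset.univ _ _
      _ = (∑ p, ∑ q, A p q ^ 2) * (∑ p, ∑ q, B p q ^ 2) := by
          simp only [Fintype.sum_prod_type, ← Finset.mul_sum, ← Finset.sum_mul]
          congr 1
          · rw [Finset.sum_comm]
          · rw [sum_reorder4]
  have he_eq : (∑ i, ∑ j, e i j)
      = ∑ k, ∑ l, ∑ k', ∑ l', ∑ i, ∑ j, (E k l k' l' i j) ^ 2 := by
    simp only [he, Fintype.sum_prod_type]
    rw [sum_reorder6b]
  have hA0 : (0:ℝ) ≤ ∑ p, ∑ q, A p q ^ 2 :=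
    Finset.sum_nonneg fun p _ => Finset.sum_nonneg fun q _ => sq_nonneg _
  have he0 : (0:ℝ) ≤ ∑ i, ∑ j, e i j :=
    Finset.sum_nonneg fun i _ => Finset.sum_nonneg fun j _ =>
      Finset.sum_nonneg fun x _ => sq_nonneg _
  have htotal : ∑ p : Fin n × Fin m, ∑ q : Fin n × Fin m, (Gmap E A B p q) ^ 2 ≤
      (∑ i, ∑ j, e i j) * ((∑ p, ∑ q, A p q ^ 2) * (∑ p, ∑ q, B p q ^ 2)) :=
    hsum.trans (mul_le_mul_of_nonneg_left hh_le he0)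
  have hmain : frob (Gmap E A B) ≤ Real.sqrt ((∑ i, ∑ j, e i j) *
      ((∑ p, ∑ q, A p q ^ 2) * (∑ p, ∑ q, B p q ^ 2))) := by
    unfold frob
    exact Real.sqrt_le_sqrt htotal
  refine hmain.trans_eq ?_
  rw [Real.sqrt_mul he0, Real.sqrt_mul hA0]
  unfold frob frob6
  rw [he_eq]
  ring

end CS

end Aux


theorem stmt1 (n R m : ℕ) (hn : 0 < n) (hR : 0 < R) (hm : 1 ≤ m)
    (U V W : Fin n → Fin n → Fin R → ℝ) (hκ : kappa U V W ≠ 1)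
    (s₁ s₂ s₃ : Fin n → ℝ)
    (hs₁ : ∀ j, s₁ j = 1 ∨ s₁ j = -1) (hs₂ : ∀ j, s₂ j = 1 ∨ s₂ j = -1)
    (hs₃ : ∀ j, s₃ j = 1 ∨ s₃ j = -1)
    (π₁ π₂ π₃ : Equiv.Perm (Fin n))
    (A B : Matrix (Fin n × Fin m) (Fin n × Fin m) ℝ) :
    frob (fhat m U V W s₁ s₂ s₃ π₁ π₂ π₃ A B - A * B) ≤
      frob A * frob B * frob6 ((1 - kappa U V W)⁻¹ • Ytens U V W - Xtens n) := by
  classical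
  have hc1 : (Mmat m s₁ π₁)ᵀ * Mmat m s₁ π₁ = 1 := MT_M s₁ π₁ hs₁
  have hc2 : (Mmat m s₂ π₂)ᵀ * Mmat m s₂ π₂ = 1 := MT_M s₂ π₂ hs₂
  have hc3 : (Mmat m s₃ π₃)ᵀ * Mmat m s₃ π₃ = 1 := MT_M s₃ π₃ hs₃
  have c1 : ∀ X : Matrix (Fin n × Fin m) (Fin n × Fin m) ℝ,
      (Mmat m s₁ π₁)ᵀ * (Mmat m s₁ π₁ * X) = X := fun X => by
    rw [← Matrix.mul_assoc, hc1, Matrix.one_mul]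
  have c2 : ∀ X : Matrix (Fin n × Fin m) (Fin n × Fin m) ℝ,
      (Mmat m s₂ π₂)ᵀ * (Mmat m s₂ π₂ * X) = X := fun X => by
    rw [← Matrix.mul_assoc, hc2, Matrix.one_mul]
  have key : fhat m U V W s₁ s₂ s₃ π₁ π₂ π₃ A B - A * B
      = (Mmat m s₁ π₁)ᵀ * Gmap ((1 - kappa U V W)⁻¹ • Ytens U V W - Xtens n)
          (Mmat m s₁ π₁ * A * (Mmat m s₂ π₂)ᵀ) (Mmat m s₂ π₂ * B * (Mmat m s₃ π₃)ᵀ) *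
          Mmat m s₃ π₃ := by
    unfold fhat
    rw [Gmap_sub_smul, Gmap_X, ← blinf_eq, Matrix.mul_sub, Matrix.sub_mul,
      Matrix.mul_smul, Matrix.smul_mul]
    congr 1
    simp only [Matrix.mul_assoc, hc3, Matrix.mul_one, c1, c2]
  rw [key, Matrix.mul_assoc]
  rw [frob_MT_mul s₁ π₁ _ hs₁, frob_mul_M s₃ π₃ _ hs₃]
  have hA' : frob (Mmat m s₁ π₁ * A * (Mmat m s₂ π₂)ᵀ) = frob A := by
    rw [Matrix.mul_assoc, frob_M_mul s₁ π₁ _ hs₁, frob_mul_MT s₂ π₂ _ hs₂]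
  have hB' : frob (Mmat m s₂ π₂ * B * (Mmat m s₃ π₃)ᵀ) = frob B := by
    rw [Matrix.mul_assoc, frob_M_mul s₂ π₂ _ hs₂, frob_mul_MT s₃ π₃ _ hs₃]
  calc frob (Gmap ((1 - kappa U V W)⁻¹ • Ytens U V W - Xtens n)
        (Mmat m s₁ π₁ * A * (Mmat m s₂ π₂)ᵀ) (Mmat m s₂ π₂ * B * (Mmat m s₃ π₃)ᵀ))
      ≤ frob6 ((1 - kappa U V W)⁻¹ • Ytens U V W - Xtens n) *
          frob (Mmat m s₁ π₁ * A * (Mmat m s₂ π₂)ᵀ) *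
          frob (Mmat m s₂ π₂ * B * (Mmat m s₃ π₃)ᵀ) := Gmap_frob_le _ _ _
    _ = frob A * frob B * frob6 ((1 - kappa U V W)⁻¹ • Ytens U V W - Xtens n) := by
        rw [hA', hB']; ring
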